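/- Let h : ℕ → ℕ be monotone and inflationary. Then for every ordinal α < ω^ω and every x ∈ ℕ, the Hardy and Cichoń hierarchies satisfy h^{h_α(x)}(x) = h^α(x), i.e., the Cichoń function h_α(x) counts exactly the number of iterations of h performed by the Hardy function h^α starting from x. -/

import Mathlib

/-!
Ordinals `α < ω^ω` are represented in Cantor normal form by their list of
coefficients, least significant first: the list `[c₀, c₁, …, c_n]` represents
`ω^n·c_n + ⋯ + ω·c₁ + c₀`.  With the standard assignment of fundamental
sequences `(β + ω^{k+1})(x) = β + ω^k·(x+1)`, the Hardy hierarchy `h^α`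
relative to `h` is characterized by the equations `HardyEqs`, and the Cichoń
hierarchy `h_α` by the equations `CichonEqs`.
-/

/-- `H` satisfies the defining equations of the Hardy hierarchy relative to
`h`: `h^0(x) = x` (a list of zeros represents the ordinal `0`),
`h^{α+1}(x) = h^α(h(x))`, and `h^λ(x) = h^{λ(x)}(x)` where for a limit
`λ = β + ω^{k+1}` (in CNF) the fundamental sequence is
`λ(x) = β + ω^k·(x+1)`. -/
def HardyEqs (h : ℕ → ℕ) (H : List ℕ → ℕ → ℕ) : Prop :=
  (∀ m x, H (List.replicate m 0) x = x) ∧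
  (∀ c l x, H ((c + 1) :: l) x = H (c :: l) (h x)) ∧
  (∀ k c r x, H (List.replicate (k + 1) 0 ++ (c + 1) :: r) x
      = H (List.replicate k 0 ++ (x + 1) :: c :: r) x)

/-- `C` satisfies the defining equations of the Cichoń hierarchy relative to
`h`: `h_0(x) = 0`, `h_{α+1}(x) = 1 + h_α(h(x))`, and `h_λ(x) = h_{λ(x)}(x)`. -/
def CichonEqs (h : ℕ → ℕ) (C : List ℕ → ℕ → ℕ) : Prop :=
  (∀ m x, C (List.replicate m 0) x = 0) ∧
  (∀ c l x, C ((c + 1) :: l) x = 1 + C (c :: l) (h x)) ∧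
  (∀ k c r x, C (List.replicate (k + 1) 0 ++ (c + 1) :: r) x
      = C (List.replicate k 0 ++ (x + 1) :: c :: r) x)

open Ordinal

noncomputable def oval : List ℕ → Ordinal.{0}
  | [] => 0
  | a :: l => ω * oval l + a

lemma oval_repl (k : ℕ) (t : List ℕ) :
    oval (List.replicate k 0 ++ t) = ω ^ k * oval t := by
  induction k with
  | zero => simp [oval]
  | succ k ih =>
      rw [List.replicate_succ, List.cons_append]
      show ω * oval (List.replicate k 0 ++ t) + ((0 : ℕ) : Ordinal) = _
      rw [ih, Nat.cast_zero, add_zero, pow_succ', mul_assoc]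

lemma omega_pow_pos (k : ℕ) : (0 : Ordinal) < ω ^ k := by
  induction k with
  | zero => simp
  | succ k ih => rw [pow_succ]; exact mul_pos ih omega0_pos

lemma oval_succ_lt (c : ℕ) (r : List ℕ) : oval (c :: r) < oval ((c + 1) :: r) := by
  simp only [oval]
  exact (add_lt_add_iff_left _).2 (by exact_mod_cast Nat.lt_succ_self c)

lemma oval_lim_lt (k c x : ℕ) (r : List ℕ) :
    oval (List.replicate k 0 ++ (x + 1) :: c :: r)
      < oval (List.replicate (k + 1) 0 ++ (c + 1) :: r) := by
  rw [oval_repl, oval_repl]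
  simp only [oval]
  have h1 : ((c : Ordinal) + 1) = ((c + 1 : ℕ) : Ordinal) := by push_cast; ring
  calc ω ^ k * (ω * (ω * oval r + ↑c) + ↑(x + 1))
      = ω ^ k * (ω * (ω * oval r + ↑c)) + ω ^ k * ↑(x + 1) := by rw [mul_add]
    _ < ω ^ k * (ω * (ω * oval r + ↑c)) + ω ^ k * ω := by
        refine (add_lt_add_iff_left _).2 ?_
        exact mul_lt_mul_of_pos_left (nat_lt_omega0 _) (omega_pow_pos k)
    _ = ω ^ (k + 1) * (ω * oval r + ↑c) + ω ^ (k + 1) := by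
        rw [pow_succ, mul_assoc]
    _ = ω ^ (k + 1) * ((ω * oval r + ↑c) + 1) := by
        conv_rhs => rw [mul_add, mul_one]
    _ = ω ^ (k + 1) * (ω * oval r + ↑(c + 1)) := by
        rw [← h1, add_assoc]

lemma list_split (l : List ℕ) :
    (∃ m, l = List.replicate m 0) ∨ ∃ k c r, l = List.replicate k 0 ++ (c + 1) :: r := by
  induction l with
  | nil => exact Or.inl ⟨0, rfl⟩
  | cons a t ih =>
      cases a with
      | zero =>
          rcases ih with ⟨m, rfl⟩ | ⟨k, c, r, rfl⟩
          · exact Or.inl ⟨m + 1, rfl⟩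
          · exact Or.inr ⟨k + 1, c, r, rfl⟩
      | succ c => exact Or.inr ⟨0, c, t, rfl⟩

/-- If `h` is monotone and inflationary, then for every ordinal `α < ω^ω`
(represented by its CNF coefficient list `l`) and every `x`, the Cichoń
function counts exactly the number of iterations of `h` performed by the
Hardy function: `h^[h_α(x)](x) = h^α(x)`. -/
theorem stmt4 (h : ℕ → ℕ) (hmono : Monotone h) (hinfl : ∀ x, x ≤ h x)
    (H C : List ℕ → ℕ → ℕ) (hH : HardyEqs h H) (hC : CichonEqs h C) :
    ∀ (l : List ℕ) (x : ℕ), h^[C l x] x = H l x := by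
  obtain ⟨hH0, hHs, hHl⟩ := hH
  obtain ⟨hC0, hCs, hCl⟩ := hC
  have key : ∀ (o : Ordinal) (l : List ℕ), oval l = o → ∀ x, h^[C l x] x = H l x := by
    intro o
    induction o using Ordinal.induction with
    | h o IH =>
      intro l hl x
      rcases list_split l with ⟨m, rfl⟩ | ⟨k, c, r, rfl⟩
      · rw [hC0, hH0, Function.iterate_zero_apply]
      · cases k with
        | zero =>
            simp only [List.replicate, List.nil_append] at hl ⊢
            rw [hCs, hHs, add_comm, Function.iterate_add_apply, Function.iterate_one]
            exact IH _ (hl ▸ oval_succ_lt c r) (c :: r) rfl (h x)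
        | succ k =>
            rw [hCl, hHl]
            exact IH _ (hl ▸ oval_lim_lt k c x r) _ rfl x
  exact fun l => key (oval l) l rfl
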